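/- Let X and Y be finite nonempty sets, let α ∈ (0,1) ∪ (1,∞), and let p be a probability distribution on X × Y. Then the supremum over all strictly positive families r_{X|Y} of (∑_{x,y} p(x,y) · r(x|y)^{(α−1)/α})^{α/(α−1)} equals (∑_{y∈Y} (∑_{x∈X} p(x,y)^α)^{1/α})^{α/(α−1)}; that is, the generalized conditional vulnerability with Kolmogorov–Nagumo function ln_{1/α} and the soft 0-1 score equals exp(−H_α^A(X|Y)), where H_α^A is the Arimoto conditional entropy of order α. -/

import Mathlib

open Real BigOperators Finset

private lemma holder_upper {X : Type*} [Fintype X] {α : ℝ} (hα : 1 < α)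
    (f g : X → ℝ) (hf : ∀ x, 0 ≤ f x) (hg : ∀ x, 0 ≤ g x) (hg1 : (∑ x, g x) = 1) :
    ∑ x, f x * g x ^ ((α - 1) / α) ≤ (∑ x, f x ^ α) ^ (1 / α) := by
  have hα0 : (0:ℝ) < α := lt_trans one_pos hα
  have hαne : α ≠ 0 := ne_of_gt hα0
  have hα1' : α - 1 ≠ 0 := sub_ne_zero.mpr (ne_of_gt hα)
  have hpq : Real.HolderConjugate α (α / (α - 1)) := (Real.holderConjugate_iff_eq_conjExponent hα).2 rfl
  have h := Real.inner_le_Lp_mul_Lq_of_nonneg (univ : Finset X) hpq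
      (f := f) (g := fun x => g x ^ ((α - 1) / α))
      (fun x _ => hf x) (fun x _ => Real.rpow_nonneg (hg x) _)
  have hmul : (α - 1) / α * (α / (α - 1)) = 1 := by field_simp
  have hgq : ∀ x, (g x ^ ((α - 1) / α)) ^ (α / (α - 1)) = g x := by
    intro x
    rw [← Real.rpow_mul (hg x), hmul, Real.rpow_one]
  simp only [hgq] at h
  rw [hg1, Real.one_rpow, mul_one] at h
  exact h

private lemma holder_lower {X : Type*} [Fintype X] {α : ℝ} (hα0 : 0 < α) (hα : α < 1)
    (f g : X → ℝ) (hf : ∀ x, 0 ≤ f x) (hg : ∀ x, 0 < g x) (hg1 : (∑ x, g x) = 1) :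
    (∑ x, f x ^ α) ^ (1 / α) ≤ ∑ x, f x * g x ^ ((α - 1) / α) := by
  have h1α : (0:ℝ) < 1 - α := by linarith
  have hpq : Real.HolderConjugate (1/α) (1/(1-α)) := by
    rw [Real.holderConjugate_iff]
    constructor
    · rw [lt_div_iff₀ hα0]; linarith
    · rw [one_div, one_div, inv_inv, inv_inv]; ring
  have hFnn : ∀ x, 0 ≤ f x ^ α * g x ^ (α - 1) :=
    fun x => mul_nonneg (Real.rpow_nonneg (hf x) _) (Real.rpow_nonneg (hg x).le _)
  have h := Real.inner_le_Lp_mul_Lq_of_nonneg (univ : Finset X) hpq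
      (f := fun x => f x ^ α * g x ^ (α - 1)) (g := fun x => g x ^ (1 - α))
      (fun x _ => hFnn x) (fun x _ => Real.rpow_nonneg (hg x).le _)
  have hFG : ∀ x, f x ^ α * g x ^ (α - 1) * g x ^ (1 - α) = f x ^ α := by
    intro x
    rw [mul_assoc, ← Real.rpow_add (hg x)]
    have : α - 1 + (1 - α) = 0 := by ring
    rw [this, Real.rpow_zero, mul_one]
  have hF2 : ∀ x, (f x ^ α * g x ^ (α - 1)) ^ (1/α) = f x * g x ^ ((α - 1)/α) := by
    intro x
    rw [Real.mul_rpow (Real.rpow_nonneg (hf x) _) (Real.rpow_nonneg (hg x).le _),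
        ← Real.rpow_mul (hf x), ← Real.rpow_mul (hg x).le,
        mul_one_div, div_self hα0.ne', Real.rpow_one, mul_one_div]
  have hG2 : ∀ x, (g x ^ (1 - α)) ^ (1/(1-α)) = g x := by
    intro x
    rw [← Real.rpow_mul (hg x).le, mul_one_div, div_self h1α.ne', Real.rpow_one]
  simp only [hFG, hF2, hG2] at h
  rw [hg1, Real.one_rpow, mul_one, one_div_one_div] at h
  have hS : 0 ≤ ∑ x, f x * g x ^ ((α - 1)/α) :=
    Finset.sum_nonneg fun x _ => mul_nonneg (hf x) (Real.rpow_nonneg (hg x).le _)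
  calc (∑ x, f x ^ α) ^ (1/α)
      ≤ ((∑ x, f x * g x ^ ((α - 1)/α)) ^ α) ^ (1/α) :=
        Real.rpow_le_rpow (Finset.sum_nonneg fun x _ => Real.rpow_nonneg (hf x) _) h
          (by positivity)
    _ = _ := by
        rw [← Real.rpow_mul hS, mul_one_div, div_self hα0.ne', Real.rpow_one]

private lemma sum_opt {X : Type*} [Fintype X] {α : ℝ} (hα0 : 0 < α)
    (f : X → ℝ) (hf : ∀ x, 0 ≤ f x) :
    ∑ x, f x * (f x ^ α / (∑ x', f x' ^ α)) ^ ((α - 1) / α)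
      = (∑ x, f x ^ α) ^ (1 / α) := by
  have hBnn : 0 ≤ ∑ x, f x ^ α :=
    Finset.sum_nonneg fun x _ => Real.rpow_nonneg (hf x) _
  rcases eq_or_lt_of_le hBnn with hB0 | hBpos
  · have hfz : ∀ x, f x = 0 := by
      intro x
      have h0 := (Finset.sum_eq_zero_iff_of_nonneg
        (fun x (_ : x ∈ univ) => Real.rpow_nonneg (hf x) α)).mp hB0.symm
      exact (Real.rpow_eq_zero (hf x) hα0.ne').mp (h0 x (Finset.mem_univ x))
    simp only [hfz, Real.zero_rpow hα0.ne', zero_mul, Finset.sum_const_zero,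
      Real.zero_rpow (one_div_ne_zero hα0.ne')]
  · have key : ∀ x, f x * (f x ^ α / (∑ x', f x' ^ α)) ^ ((α - 1)/α)
        = f x ^ α / (∑ x', f x' ^ α) ^ ((α - 1)/α) := by
      intro x
      rcases eq_or_lt_of_le (hf x) with h0 | h0
      · rw [← h0]
        simp [Real.zero_rpow hα0.ne']
      · rw [Real.div_rpow (Real.rpow_nonneg (hf x) _) hBnn, ← mul_div_assoc]
        congr 1
        rw [← Real.rpow_mul (hf x)]
        nth_rewrite 1 [← Real.rpow_one (f x)]
        rw [← Real.rpow_add h0]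
        congr 1
        field_simp
        ring
    rw [Finset.sum_congr rfl fun x _ => key x, ← Finset.sum_div]
    rw [show (∑ x, f x ^ α) / (∑ x', f x' ^ α) ^ ((α - 1)/α)
        = (∑ x, f x ^ α) ^ (1:ℝ) / (∑ x, f x ^ α) ^ ((α - 1)/α) from by rw [Real.rpow_one],
      ← Real.rpow_sub hBpos]
    congr 1
    field_simp
    ring

/-- The generalized conditional vulnerability with KN function `ln_{1/α}` and the soft
0-1 score equals `exp(−H_α^A(X|Y))` (Arimoto conditional entropy). -/
theorem conditional_vulnerability_eq_exp_neg_arimoto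
    {X Y : Type*} [Fintype X] [Fintype Y] [Nonempty X] [Nonempty Y]
    (α : ℝ) (hα0 : 0 < α) (hα1 : α ≠ 1)
    (p : X × Y → ℝ) (hp : ∀ z, 0 ≤ p z) (hp1 : (∑ z, p z) = 1) :
    sSup {v : ℝ | ∃ r : Y → X → ℝ, (∀ y x, 0 < r y x) ∧ (∀ y, (∑ x, r y x) = 1) ∧
        v = (∑ z : X × Y, p z * r z.2 z.1 ^ ((α - 1) / α)) ^ (α / (α - 1))}
      = (∑ y, (∑ x, p (x, y) ^ α) ^ (1 / α)) ^ (α / (α - 1)) := by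
  classical
  have hαne : α ≠ 0 := ne_of_gt hα0
  have hα1' : α - 1 ≠ 0 := sub_ne_zero.mpr hα1
  obtain ⟨z₀, hz₀⟩ : ∃ z, 0 < p z := by
    by_contra h
    push_neg at h
    have h0 : (∑ z, p z) = 0 := Finset.sum_eq_zero fun z _ => le_antisymm (h z) (hp z)
    rw [h0] at hp1
    exact zero_ne_one hp1
  have hBnn : ∀ y : Y, 0 ≤ ∑ x, p (x, y) ^ α :=
    fun y => Finset.sum_nonneg fun x _ => Real.rpow_nonneg (hp _) _
  have hB₀ : 0 < ∑ x, p (x, z₀.2) ^ α := by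
    have h := Finset.single_le_sum (f := fun x => p (x, z₀.2) ^ α)
      (fun x _ => Real.rpow_nonneg (hp _) α) (Finset.mem_univ z₀.1)
    exact lt_of_lt_of_le (Real.rpow_pos_of_pos hz₀ α) h
  have hCpos : 0 < ∑ y, (∑ x, p (x, y) ^ α) ^ (1 / α) :=
    lt_of_lt_of_le (Real.rpow_pos_of_pos hB₀ (1/α))
      (Finset.single_le_sum (fun y _ => Real.rpow_nonneg (hBnn y) _) (Finset.mem_univ z₀.2))
  -- Upper bound
  have hub : (∑ y, (∑ x, p (x, y) ^ α) ^ (1 / α)) ^ (α / (α - 1)) ∈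
      upperBounds {v : ℝ | ∃ r : Y → X → ℝ, (∀ y x, 0 < r y x) ∧ (∀ y, (∑ x, r y x) = 1) ∧
        v = (∑ z : X × Y, p z * r z.2 z.1 ^ ((α - 1) / α)) ^ (α / (α - 1))} := by
    rintro v ⟨r, hrpos, hrsum, rfl⟩
    have hsplit : (∑ z : X × Y, p z * r z.2 z.1 ^ ((α - 1)/α))
        = ∑ y, ∑ x, p (x, y) * r y x ^ ((α - 1)/α) := by
      rw [Fintype.sum_prod_type_right]
    rcases lt_or_gt_of_ne hα1 with hlt | hgt
    · have hCS : (∑ y, (∑ x, p (x, y) ^ α) ^ (1/α))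
          ≤ ∑ z : X × Y, p z * r z.2 z.1 ^ ((α - 1)/α) := by
        rw [hsplit]
        exact Finset.sum_le_sum fun y _ =>
          holder_lower hα0 hlt (fun x => p (x, y)) (r y) (fun x => hp _) (hrpos y) (hrsum y)
      have hκ : α / (α - 1) ≤ 0 := le_of_lt (div_neg_of_pos_of_neg hα0 (by linarith))
      exact Real.rpow_le_rpow_of_nonpos hCpos hCS hκ
    · have hSC : (∑ z : X × Y, p z * r z.2 z.1 ^ ((α - 1)/α))
          ≤ ∑ y, (∑ x, p (x, y) ^ α) ^ (1/α) := by
        rw [hsplit]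
        exact Finset.sum_le_sum fun y _ =>
          holder_upper hgt (fun x => p (x, y)) (r y) (fun x => hp _)
            (fun x => (hrpos y x).le) (hrsum y)
      have hSnn : 0 ≤ ∑ z : X × Y, p z * r z.2 z.1 ^ ((α - 1)/α) :=
        Finset.sum_nonneg fun z _ => mul_nonneg (hp z) (Real.rpow_nonneg (hrpos _ _).le _)
      exact Real.rpow_le_rpow hSnn hSC (le_of_lt (div_pos hα0 (by linarith)))
  -- the approximating family
  set n : ℝ := (Fintype.card X : ℝ) with hn
  have hnpos : 0 < n := by
    rw [hn]
    exact_mod_cast Fintype.card_pos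
  set G : ℝ → ℝ := fun δ => ∑ z : X × Y,
      p z * ((p z ^ α + δ) / ((∑ x, p (x, z.2) ^ α) + n * δ)) ^ ((α - 1)/α) with hGdef
  have hmem : ∀ δ : ℝ, 0 < δ → (G δ) ^ (α / (α - 1)) ∈
      {v : ℝ | ∃ r : Y → X → ℝ, (∀ y x, 0 < r y x) ∧ (∀ y, (∑ x, r y x) = 1) ∧
        v = (∑ z : X × Y, p z * r z.2 z.1 ^ ((α - 1) / α)) ^ (α / (α - 1))} := by
    intro δ hδ
    refine ⟨fun y x => (p (x, y) ^ α + δ) / ((∑ x', p (x', y) ^ α) + n * δ), ?_, ?_, ?_⟩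
    · intro y x
      exact div_pos (add_pos_of_nonneg_of_pos (Real.rpow_nonneg (hp _) _) hδ)
        (add_pos_of_nonneg_of_pos (hBnn y) (mul_pos hnpos hδ))
    · intro y
      rw [← Finset.sum_div, Finset.sum_add_distrib, Finset.sum_const, Finset.card_univ,
        nsmul_eq_mul, ← hn]
      exact div_self (ne_of_gt (add_pos_of_nonneg_of_pos (hBnn y) (mul_pos hnpos hδ)))
    · rfl
  -- tendsto
  have hL : Filter.Tendsto G (nhdsWithin 0 (Set.Ioi 0))
      (nhds (∑ y, (∑ x, p (x, y) ^ α) ^ (1 / α))) := by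
    have h2 : (∑ z : X × Y, p z * (p z ^ α / (∑ x, p (x, z.2) ^ α)) ^ ((α - 1)/α))
        = ∑ y, (∑ x, p (x, y) ^ α) ^ (1 / α) := by
      rw [Fintype.sum_prod_type_right]
      exact Finset.sum_congr rfl fun y _ => sum_opt hα0 (fun x => p (x, y)) (fun x => hp _)
    have h1 : Filter.Tendsto G (nhds 0)
        (nhds (∑ z : X × Y, p z * (p z ^ α / (∑ x, p (x, z.2) ^ α)) ^ ((α - 1)/α))) := by
      rw [hGdef]
      apply tendsto_finset_sum
      intro z _
      rcases eq_or_lt_of_le (hp z) with hz | hz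
      · simp only [← hz, zero_mul]
        exact tendsto_const_nhds
      · have hBz : 0 < ∑ x, p (x, z.2) ^ α := by
          have h := Finset.single_le_sum (f := fun x => p (x, z.2) ^ α)
            (fun x _ => Real.rpow_nonneg (hp _) α) (Finset.mem_univ z.1)
          exact lt_of_lt_of_le (Real.rpow_pos_of_pos hz α) h
        have hc1 : ContinuousAt (fun δ : ℝ =>
            (p z ^ α + δ) / ((∑ x, p (x, z.2) ^ α) + n * δ)) 0 :=
          ContinuousAt.div (continuousAt_const.add continuousAt_id)
            (continuousAt_const.add (continuousAt_const.mul continuousAt_id))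
            (by simpa using hBz.ne')
        have hc2 : ContinuousAt (fun δ : ℝ =>
            ((p z ^ α + δ) / ((∑ x, p (x, z.2) ^ α) + n * δ)) ^ ((α - 1)/α)) 0 :=
          hc1.rpow_const (Or.inl (by
            simpa using (div_pos (Real.rpow_pos_of_pos hz α) hBz).ne'))
        have hc3 : ContinuousAt (fun δ : ℝ =>
            p z * ((p z ^ α + δ) / ((∑ x, p (x, z.2) ^ α) + n * δ)) ^ ((α - 1)/α)) 0 :=
          continuousAt_const.mul hc2
        simpa using hc3.tendsto
    rw [← h2]
    exact h1.mono_left nhdsWithin_le_nhds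
  have hFt : Filter.Tendsto (fun δ => (G δ) ^ (α / (α - 1))) (nhdsWithin 0 (Set.Ioi 0))
      (nhds ((∑ y, (∑ x, p (x, y) ^ α) ^ (1 / α)) ^ (α / (α - 1)))) :=
    ((Real.continuousAt_rpow_const _ _ (Or.inl hCpos.ne')).tendsto).comp hL
  refine IsLUB.csSup_eq ⟨hub, ?_⟩ ⟨_, hmem 1 one_pos⟩
  intro b hb
  refine le_of_tendsto hFt ?_
  filter_upwards [self_mem_nhdsWithin] with δ hδ
  exact hb (hmem δ hδ)
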